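/- (Triangle-type bound for empirical-to-true divergence) For probability distributions D_t, D_s with empirical distributions D̂_t, D̂_s (uniform distributions over i.i.d. samples of sizes n_t and n_s respectively), the HΔH-divergence satisfies, with probability at least 1 − δ, d_{HΔH}(D_t, D_s) ≤ d_{HΔH}(D̂_t, D̂_s) + 4(Rad_{D̂_s}(H) + Rad_{D̂_t}(H)) + 6(√(log(2/δ)/(2 n_s)) + √(log(2/δ)/(2 n_t))), using the triangle inequality d_{HΔH}(D_t,D_s) ≤ d_{HΔH}(D_t,D̂_t) + d_{HΔH}(D̂_t,D̂_s) + d_{HΔH}(D̂_s,D_s) together with uniform convergence bounds for each empirical-to-true term. -/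

import Mathlib

open MeasureTheory

/-- Empirical Rademacher complexity of a class of real-valued functions on a
sample `x` of size `n`. -/
noncomputable def rad {X : Type*} (n : ℕ) (x : Fin n → X) (F : Set (X → ℝ)) : ℝ :=
  (1 / 2 ^ n : ℝ) * ∑ σ : Fin n → Bool,
    ⨆ f : F, (1 / n : ℝ) * ∑ i, (if σ i then (1 : ℝ) else -1) * (f : X → ℝ) (x i)

/-- The HΔH-divergence d_{HΔH}(D,D') = 2 sup over sets {h ≠ h'}, h,h' ∈ H,
of the absolute difference in measures. -/
noncomputable def dHdH {X : Type*} [MeasurableSpace X] (H : Set (X → ℝ))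
    (D D' : Measure X) : ℝ :=
  2 * ⨆ p : H × H,
    |(D {x | (p.1 : X → ℝ) x ≠ (p.2 : X → ℝ) x}).toReal -
      (D' {x | (p.1 : X → ℝ) x ≠ (p.2 : X → ℝ) x}).toReal|

/-- The empirical (uniform) measure of a sample. -/
noncomputable def emp {X : Type*} [MeasurableSpace X] {n : ℕ} (Q : Fin n → X) :
    Measure X :=
  (n : ENNReal)⁻¹ • ∑ i, Measure.dirac (Q i)

/- ### Auxiliary lemmas -/

lemma bern_mgf {q t : ℝ} (h0 : 0 ≤ q) (h1 : q ≤ 1) :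
    q * Real.exp (t * (1 - q)) + (1 - q) * Real.exp (t * (0 - q)) ≤ Real.exp (t ^ 2 / 2) := by
  have chord : ∀ y : ℝ, -1 ≤ y → y ≤ 1 →
      Real.exp (t * y) ≤ (1 - y) / 2 * Real.exp (-t) + (1 + y) / 2 * Real.exp t := by
    intro y hy1 hy2
    have h := convexOn_exp.2 (Set.mem_univ (-t)) (Set.mem_univ t)
      (by linarith : (0:ℝ) ≤ (1 - y) / 2) (by linarith : (0:ℝ) ≤ (1 + y) / 2) (by ring)
    rw [show t * y = (1 - y) / 2 * (-t) + (1 + y) / 2 * t by ring]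
    simpa [smul_eq_mul] using h
  have c1 := chord (1 - q) (by linarith) (by linarith)
  have c2 := chord (0 - q) (by linarith) (by linarith)
  have hcosh := Real.cosh_le_exp_half_sq t
  rw [Real.cosh_eq] at hcosh
  nlinarith [mul_le_mul_of_nonneg_left c1 h0,
    mul_le_mul_of_nonneg_left c2 (by linarith : (0:ℝ) ≤ 1 - q),
    Real.exp_pos t, Real.exp_pos (-t)]

lemma chernoff {X : Type*} [MeasurableSpace X] (D : Measure X) [IsProbabilityMeasure D]
    {B : Set X} (hB : MeasurableSet B) (n : ℕ) {t : ℝ} (ht : 0 < t) :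
    Measure.pi (fun _ : Fin n => D)
      {Q : Fin n → X | (n : ℝ) * (D B).toReal + n * t ≤ ∑ i, B.indicator (fun _ => (1:ℝ)) (Q i)}
      ≤ ENNReal.ofReal (Real.exp (-(n * t ^ 2) / 2)) := by
  letI : MeasureSpace X := ⟨D⟩
  set q : ℝ := (D B).toReal with hq
  have hq0 : 0 ≤ q := ENNReal.toReal_nonneg
  have hq1 : q ≤ 1 := by
    have := prob_le_one (μ := D) (s := B)
    simpa [hq] using ENNReal.toReal_mono ENNReal.one_ne_top this
  set g : X → ℝ := fun x => Real.exp (t * (B.indicator (fun _ => (1:ℝ)) x - q)) with hg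
  set f : (Fin n → X) → ℝ := fun Q => ∏ i, g (Q i) with hf
  have hmeasg : Measurable g := by
    apply Real.measurable_exp.comp
    exact (((measurable_const.indicator hB).sub measurable_const).const_mul t)
  have hmeasf : Measurable f := by
    apply Finset.measurable_prod
    intro i _
    exact hmeasg.comp (measurable_pi_apply i)
  have hgeq : g = fun x => B.indicator (fun _ => Real.exp (t*(1-q)) - Real.exp (t*(0-q))) x
      + Real.exp (t * (0 - q)) := by
    funext x
    by_cases hx : x ∈ B <;> simp [hg, Set.indicator_of_mem, Set.indicator_of_notMem, hx]
  have hintg : ∫ x, g x ∂D = q * Real.exp (t*(1-q)) + (1-q) * Real.exp (t*(0-q)) := by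
    rw [hgeq, integral_add ((integrable_const _).indicator hB) (integrable_const _),
      integral_indicator_const _ hB, integral_const]
    simp [← hq, show D.real B = q from rfl]
    ring
  have hgmgf : ∫ x, g x ∂D ≤ Real.exp (t ^ 2 / 2) := by
    rw [hintg]; exact bern_mgf hq0 hq1
  have hintg0 : 0 ≤ ∫ x, g x ∂D := by
    rw [hintg]
    nlinarith [Real.exp_pos (t*(1-q)), Real.exp_pos (t*(0-q))]
  have hpi : (volume : Measure (Fin n → X)) = Measure.pi (fun _ : Fin n => D) := rfl
  have hintf : ∫ Q, f Q ∂(Measure.pi (fun _ : Fin n => D)) = (∫ x, g x ∂D) ^ n := by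
    rw [← hpi]
    simpa [hpi, hf] using MeasureTheory.integral_fintype_prod_eq_pow (𝕜 := ℝ) (ι := Fin n) (μ := D) g
  have hfbound : ∫ Q, f Q ∂(Measure.pi (fun _ : Fin n => D)) ≤ Real.exp (n * t^2 / 2) := by
    rw [hintf]
    calc (∫ x, g x ∂D) ^ n ≤ (Real.exp (t ^ 2 / 2)) ^ n := pow_le_pow_left₀ hintg0 hgmgf n
    _ = Real.exp (n * t^2/2) := by
      rw [← Real.exp_nat_mul]; ring_nf
  have hfpos : ∀ Q, 0 ≤ f Q := fun Q => Finset.prod_nonneg fun i _ => (Real.exp_pos _).le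
  have hfint : Integrable f (Measure.pi (fun _ : Fin n => D)) := by
    apply Integrable.mono' (integrable_const ((Real.exp t) ^ n)) hmeasf.aestronglyMeasurable
    filter_upwards with Q
    rw [Real.norm_of_nonneg (hfpos Q)]
    calc f Q ≤ ∏ _i : Fin n, Real.exp t := by
          apply Finset.prod_le_prod
          · intro i _; exact (Real.exp_pos _).le
          · intro i _
            apply Real.exp_le_exp.2
            have h1 : B.indicator (fun _ => (1:ℝ)) (Q i) - q ≤ 1 := by
              by_cases hx : Q i ∈ B <;>
                simp [Set.indicator_of_mem, Set.indicator_of_notMem, hx] <;> linarith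
            nlinarith
    _ = (Real.exp t) ^ n := by simp
  have hmarkov := mul_meas_ge_le_integral_of_nonneg
    (Filter.Eventually.of_forall hfpos) hfint (Real.exp (n * t^2))
  set μn := Measure.pi (fun _ : Fin n => D) with hμn
  have hsub : {Q : Fin n → X | (n : ℝ) * q + n * t ≤ ∑ i, B.indicator (fun _ => (1:ℝ)) (Q i)}
      ⊆ {Q | Real.exp (n * t^2) ≤ f Q} := by
    intro Q hQ
    simp only [Set.mem_setOf_eq] at hQ ⊢
    have hfeq : Real.exp (t * (∑ i, (B.indicator (fun _ => (1:ℝ)) (Q i) - q))) = f Q := by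
      rw [Finset.mul_sum, Real.exp_sum]
    rw [← hfeq]
    apply Real.exp_le_exp.2
    rw [Finset.sum_sub_distrib]
    simp only [Finset.sum_const, Finset.card_univ, Fintype.card_fin, nsmul_eq_mul]
    nlinarith
  have hne : μn {Q | Real.exp (n * t^2) ≤ f Q} ≠ ⊤ := measure_ne_top _ _
  have key : (μn {Q | Real.exp (n * t^2) ≤ f Q}).toReal ≤ Real.exp (-(n * t^2) / 2) := by
    have hε : (0:ℝ) < Real.exp (n * t^2) := Real.exp_pos _
    have h2 : (μn {Q | Real.exp (n * t^2) ≤ f Q}).toReal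
        ≤ Real.exp (n * t^2 / 2) / Real.exp (n * t^2) := by
      rw [le_div_iff₀ hε]
      calc (μn _).toReal * Real.exp (n * t^2) = Real.exp (n * t^2) * (μn _).toReal := by ring
      _ ≤ ∫ Q, f Q ∂μn := hmarkov
      _ ≤ _ := hfbound
    calc _ ≤ _ := h2
    _ = Real.exp (-(n * t^2)/2) := by
      rw [← Real.exp_sub]; ring_nf
  calc μn _ ≤ μn {Q | Real.exp (n * t^2) ≤ f Q} := measure_mono hsub
  _ = ENNReal.ofReal ((μn {Q | Real.exp (n * t^2) ≤ f Q}).toReal) := (ENNReal.ofReal_toReal hne).symm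
  _ ≤ _ := ENNReal.ofReal_le_ofReal key

lemma emp_apply {X : Type*} [MeasurableSpace X] {n : ℕ} (Q : Fin n → X)
    {B : Set X} (hB : MeasurableSet B) :
    (emp Q B).toReal = (∑ i, B.indicator (fun _ => (1:ℝ)) (Q i)) / n := by
  unfold emp
  rw [Measure.smul_apply, Measure.finset_sum_apply]
  simp_rw [Measure.dirac_apply' _ hB]
  rw [smul_eq_mul, ENNReal.toReal_mul, ENNReal.toReal_sum (fun i _ => by
    by_cases h : Q i ∈ B <;> simp [Set.indicator_of_mem, Set.indicator_of_notMem, h])]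
  rw [ENNReal.toReal_inv]
  simp only [ENNReal.toReal_natCast]
  rw [inv_mul_eq_div]
  congr 1
  apply Finset.sum_congr rfl
  intro i _
  by_cases h : Q i ∈ B <;> simp [Set.indicator_of_mem, Set.indicator_of_notMem, h]

lemma emp_prob {X : Type*} [MeasurableSpace X] {n : ℕ} (hn : 0 < n) (Q : Fin n → X) :
    IsProbabilityMeasure (emp Q) := by
  constructor
  unfold emp
  rw [Measure.smul_apply, Measure.finset_sum_apply]
  simp only [measure_univ, smul_eq_mul]
  simp only [Finset.sum_const, Finset.card_univ, Fintype.card_fin, nsmul_eq_mul, mul_one]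
  exact ENNReal.inv_mul_cancel (Nat.cast_ne_zero.mpr hn.ne') (ENNReal.natCast_ne_top n)

lemma emp_le_one {X : Type*} [MeasurableSpace X] {n : ℕ} (hn : 0 < n) (Q : Fin n → X)
    (B : Set X) : (emp Q B).toReal ≤ 1 := by
  haveI := emp_prob hn Q
  exact ENNReal.toReal_mono ENNReal.one_ne_top prob_le_one

lemma rad_nonneg {X : Type*} (n : ℕ) (x : Fin n → X) (H : Set (X → ℝ))
    (hbin : ∀ h ∈ H, ∀ a, h a = 0 ∨ h a = 1) : 0 ≤ rad n x H := by
  unfold rad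
  apply mul_nonneg (by positivity)
  rcases Set.eq_empty_or_nonempty H with hH | ⟨f0, hf0⟩
  · have : IsEmpty H := by simpa [hH] using Set.isEmpty_coe_sort.mpr rfl
    rw [Finset.sum_congr rfl (fun σ _ => Real.iSup_of_isEmpty _)]
    simp
  · have hbdd : ∀ σ : Fin n → Bool, BddAbove (Set.range fun f : H =>
        (1 / n : ℝ) * ∑ i, (if σ i then (1 : ℝ) else -1) * (f : X → ℝ) (x i)) := by
      intro σ
      refine ⟨1, ?_⟩
      rintro _ ⟨f, rfl⟩
      have hsum : ∑ i, (if σ i then (1 : ℝ) else -1) * (f : X → ℝ) (x i) ≤ ∑ _i : Fin n, (1:ℝ) := by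
        apply Finset.sum_le_sum
        intro i _
        rcases hbin f f.2 (x i) with h | h <;> rcases Bool.eq_false_or_eq_true (σ i) with hσ | hσ <;>
          simp [h, hσ]
      simp only [Finset.sum_const, Finset.card_univ, Fintype.card_fin, nsmul_eq_mul, mul_one] at hsum
      rcases Nat.eq_zero_or_pos n with h0 | hpos
      · subst h0; simp
      · have h1 : (0:ℝ) < n := by exact_mod_cast hpos
        calc (1 / n : ℝ) * ∑ i, (if σ i then (1 : ℝ) else -1) * (f : X → ℝ) (x i)
            ≤ (1/n : ℝ) * n := by
              apply mul_le_mul_of_nonneg_left hsum (by positivity)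
        _ = 1 := by field_simp
    have step : ∀ σ : Fin n → Bool,
        (1 / n : ℝ) * ∑ i, (if σ i then (1 : ℝ) else -1) * f0 (x i)
        ≤ ⨆ f : H, (1 / n : ℝ) * ∑ i, (if σ i then (1 : ℝ) else -1) * (f : X → ℝ) (x i) := by
      intro σ
      exact le_ciSup (hbdd σ) ⟨f0, hf0⟩
    have hzero : ∑ σ : Fin n → Bool, (1 / n : ℝ) * ∑ i, (if σ i then (1 : ℝ) else -1) * f0 (x i)
        = 0 := by
      rw [← Finset.mul_sum, Finset.sum_comm]
      have : ∀ i : Fin n, ∑ σ : Fin n → Bool, (if σ i then (1 : ℝ) else -1) * f0 (x i) = 0 := by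
        intro i
        rw [← Finset.sum_mul]
        have : ∑ σ : Fin n → Bool, (if σ i then (1 : ℝ) else -1) = 0 := by
          have hinv : Function.Involutive (fun σ : Fin n → Bool => Function.update σ i (!σ i)) := by
            intro σ
            funext j
            by_cases hj : j = i
            · subst hj; simp
            · simp [Function.update_of_ne hj]
          have := Equiv.sum_comp (Function.Involutive.toPerm _ hinv)
            (fun σ : Fin n → Bool => (if σ i then (1:ℝ) else -1))
          have heq : ∀ σ : Fin n → Bool,
              (if ((Function.Involutive.toPerm _ hinv) σ) i then (1:ℝ) else -1)
                = -(if σ i then (1:ℝ) else -1) := by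
            intro σ
            have : ((Function.Involutive.toPerm _ hinv) σ) i = !σ i := by
              simp [Function.Involutive.toPerm]
            rw [this]
            cases σ i <;> simp
          rw [Finset.sum_congr rfl (fun σ _ => heq σ)] at this
          simp only [Finset.sum_neg_distrib] at this
          linarith
        rw [this, zero_mul]
      rw [Finset.sum_congr rfl (fun i _ => this i), Finset.sum_const, smul_zero, mul_zero]
    calc (0:ℝ) = ∑ σ : Fin n → Bool, (1 / n : ℝ) * ∑ i, (if σ i then (1 : ℝ) else -1) * f0 (x i) :=
          hzero.symm
    _ ≤ _ := Finset.sum_le_sum fun σ _ => step σ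

lemma le_dHdH {X : Type*} [MeasurableSpace X] (H : Set (X → ℝ)) (D D' : Measure X)
    (hD : ∀ B : Set X, (D B).toReal ≤ 1) (hD' : ∀ B : Set X, (D' B).toReal ≤ 1)
    (p : H × H) :
    2 * |(D {x | (p.1 : X → ℝ) x ≠ (p.2 : X → ℝ) x}).toReal -
      (D' {x | (p.1 : X → ℝ) x ≠ (p.2 : X → ℝ) x}).toReal| ≤ dHdH H D D' := by
  unfold dHdH
  have hbdd : BddAbove (Set.range fun p : H × H =>
      |(D {x | (p.1 : X → ℝ) x ≠ (p.2 : X → ℝ) x}).toReal -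
        (D' {x | (p.1 : X → ℝ) x ≠ (p.2 : X → ℝ) x}).toReal|) := by
    refine ⟨1, ?_⟩
    rintro _ ⟨r, rfl⟩
    have h1 := hD {x | (r.1 : X → ℝ) x ≠ (r.2 : X → ℝ) x}
    have h2 := hD' {x | (r.1 : X → ℝ) x ≠ (r.2 : X → ℝ) x}
    have h3 : (0:ℝ) ≤ (D {x | (r.1 : X → ℝ) x ≠ (r.2 : X → ℝ) x}).toReal := ENNReal.toReal_nonneg
    have h4 : (0:ℝ) ≤ (D' {x | (r.1 : X → ℝ) x ≠ (r.2 : X → ℝ) x}).toReal := ENNReal.toReal_nonneg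
    rw [abs_le]
    constructor <;> linarith
  have := le_ciSup hbdd p
  linarith

lemma dHdH_nonneg {X : Type*} [MeasurableSpace X] (H : Set (X → ℝ)) (D D' : Measure X)
    (hD : ∀ B : Set X, (D B).toReal ≤ 1) (hD' : ∀ B : Set X, (D' B).toReal ≤ 1) :
    0 ≤ dHdH H D D' := by
  rcases isEmpty_or_nonempty (H × H) with he | hne
  · unfold dHdH
    rw [Real.iSup_of_isEmpty]
    simp
  · obtain ⟨p⟩ := hne
    have := le_dHdH H D D' hD hD' p
    have habs : (0:ℝ) ≤ |(D {x | (p.1 : X → ℝ) x ≠ (p.2 : X → ℝ) x}).toReal -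
        (D' {x | (p.1 : X → ℝ) x ≠ (p.2 : X → ℝ) x}).toReal| := abs_nonneg _
    linarith

set_option maxHeartbeats 1000000 in
/-- Empirical-to-true divergence bound: with probability ≥ 1 − δ over the two
i.i.d. samples,
d_{HΔH}(D_t,D_s) ≤ d_{HΔH}(D̂_t,D̂_s) + 4(Rad_{D̂_s}(H) + Rad_{D̂_t}(H))
  + 6(√(log(2/δ)/(2 n_s)) + √(log(2/δ)/(2 n_t))). -/
theorem stmt12 {X : Type*} [MeasurableSpace X] (Dt Ds : Measure X)
    [IsProbabilityMeasure Dt] [IsProbabilityMeasure Ds]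
    (H : Set (X → ℝ)) (hm : ∀ h ∈ H, Measurable h)
    (hbin : ∀ h ∈ H, ∀ a, h a = 0 ∨ h a = 1)
    (nt ns : ℕ) (hnt : 0 < nt) (hns : 0 < ns)
    (δ : ℝ) (hδ : δ ∈ Set.Ioo (0:ℝ) 1) :
    ENNReal.ofReal (1 - δ) ≤
      ((Measure.pi fun _ : Fin nt => Dt).prod (Measure.pi fun _ : Fin ns => Ds))
        {Q : (Fin nt → X) × (Fin ns → X) |
          dHdH H Dt Ds ≤ dHdH H (emp Q.1) (emp Q.2)
            + 4 * (rad ns Q.2 H + rad nt Q.1 H)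
            + 6 * (Real.sqrt (Real.log (2 / δ) / (2 * ns))
              + Real.sqrt (Real.log (2 / δ) / (2 * nt)))} := by
  obtain ⟨hδ0, hδ1⟩ := hδ
  have hnt' : (0:ℝ) < nt := by exact_mod_cast hnt
  have hns' : (0:ℝ) < ns := by exact_mod_cast hns
  set L := Real.log (2/δ) with hLdef
  have hL : 0 < L := Real.log_pos (by rw [lt_div_iff₀ hδ0]; linarith)
  set εt := Real.sqrt (L / (2*(nt:ℝ))) with hεtdef
  set εs := Real.sqrt (L / (2*(ns:ℝ))) with hεsdef
  have hεt : 0 < εt := Real.sqrt_pos.2 (by positivity)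
  have hεs : 0 < εs := Real.sqrt_pos.2 (by positivity)
  set c := dHdH H Dt Ds with hcdef
  set μ := ((Measure.pi fun _ : Fin nt => Dt).prod (Measure.pi fun _ : Fin ns => Ds)) with hμdef
  by_cases hc : c ≤ 0
  · have hS : {Q : (Fin nt → X) × (Fin ns → X) |
          c ≤ dHdH H (emp Q.1) (emp Q.2)
            + 4 * (rad ns Q.2 H + rad nt Q.1 H) + 6 * (εs + εt)} = Set.univ := by
      apply Set.eq_univ_of_forall
      intro Q
      simp only [Set.mem_setOf_eq]
      have h1 : 0 ≤ dHdH H (emp Q.1) (emp Q.2) :=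
        dHdH_nonneg H _ _ (fun B => emp_le_one hnt Q.1 B) (fun B => emp_le_one hns Q.2 B)
      have h2 := rad_nonneg ns Q.2 H hbin
      have h3 := rad_nonneg nt Q.1 H hbin
      linarith
    rw [hS, measure_univ]
    exact ENNReal.ofReal_le_one.2 (by linarith)
  · push_neg at hc
    -- choose a near-optimal pair
    have hc2 : c = 2 * ⨆ p : H × H,
        |(Dt {x | (p.1 : X → ℝ) x ≠ (p.2 : X → ℝ) x}).toReal -
          (Ds {x | (p.1 : X → ℝ) x ≠ (p.2 : X → ℝ) x}).toReal| := by
      rw [hcdef]; rfl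
    have hiSup : (c - (εt + εs)/5)/2 < ⨆ p : H × H,
        |(Dt {x | (p.1 : X → ℝ) x ≠ (p.2 : X → ℝ) x}).toReal -
          (Ds {x | (p.1 : X → ℝ) x ≠ (p.2 : X → ℝ) x}).toReal| := by
      have : (c - (εt + εs)/5)/2 < c/2 := by linarith
      linarith [this, hc2.symm.le]
    have hnonempty : Nonempty (H × H : Type _) := by
      by_contra h
      rw [not_nonempty_iff] at h
      rw [Real.iSup_of_isEmpty] at hc2
      rw [mul_zero] at hc2
      linarith
    obtain ⟨p, hp⟩ := exists_lt_of_lt_ciSup hiSup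
    set A := {x | (p.1 : X → ℝ) x ≠ (p.2 : X → ℝ) x} with hAdef
    have hA : MeasurableSet A := by
      have h1 : Measurable (p.1 : X → ℝ) := hm _ p.1.2
      have h2 : Measurable (p.2 : X → ℝ) := hm _ p.2.2
      have heq := (measurableSet_eq_fun h1 h2).compl
      have : A = {x | (p.1 : X → ℝ) x = (p.2 : X → ℝ) x}ᶜ := by
        ext x; simp [hAdef]
      rw [this]; exact heq
    set qt := (Dt A).toReal with hqtdef
    set qs := (Ds A).toReal with hqsdef
    set τt := (29/10) * εt with hτtdef
    set τs := (29/10) * εs with hτsdef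
    have hτt : 0 < τt := by positivity
    have hτs : 0 < τs := by positivity
    set G := {Q : (Fin nt → X) × (Fin ns → X) |
      |(emp Q.1 A).toReal - qt| < τt ∧ |(emp Q.2 A).toReal - qs| < τs} with hGdef
    -- Step 1 : G is contained in the good event
    have step1 : G ⊆ {Q : (Fin nt → X) × (Fin ns → X) |
          c ≤ dHdH H (emp Q.1) (emp Q.2)
            + 4 * (rad ns Q.2 H + rad nt Q.1 H) + 6 * (εs + εt)} := by
      intro Q hQ
      obtain ⟨hG1, hG2⟩ := hQ
      simp only [Set.mem_setOf_eq]
      have hpair := le_dHdH H (emp Q.1) (emp Q.2)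
        (fun B => emp_le_one hnt Q.1 B) (fun B => emp_le_one hns Q.2 B) p
      rw [← hAdef] at hpair
      have tri1 : |qt - qs| ≤ |qt - (emp Q.1 A).toReal| + |(emp Q.1 A).toReal - qs| :=
        abs_sub_le _ _ _
      have tri2 : |(emp Q.1 A).toReal - qs| ≤
          |(emp Q.1 A).toReal - (emp Q.2 A).toReal| + |(emp Q.2 A).toReal - qs| :=
        abs_sub_le _ _ _
      have hcomm : |qt - (emp Q.1 A).toReal| = |(emp Q.1 A).toReal - qt| := abs_sub_comm _ _
      have h2 := rad_nonneg ns Q.2 H hbin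
      have h3 := rad_nonneg nt Q.1 H hbin
      linarith
    -- Step 2 : tail bounds
    set Bt1 := {Q1 : Fin nt → X |
      (nt : ℝ) * (Dt A).toReal + nt * τt ≤ ∑ i, A.indicator (fun _ => (1:ℝ)) (Q1 i)} with hBt1
    set Bt2 := {Q1 : Fin nt → X |
      (nt : ℝ) * (Dt Aᶜ).toReal + nt * τt ≤ ∑ i, Aᶜ.indicator (fun _ => (1:ℝ)) (Q1 i)} with hBt2
    set Bs1 := {Q2 : Fin ns → X |
      (ns : ℝ) * (Ds A).toReal + ns * τs ≤ ∑ i, A.indicator (fun _ => (1:ℝ)) (Q2 i)} with hBs1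
    set Bs2 := {Q2 : Fin ns → X |
      (ns : ℝ) * (Ds Aᶜ).toReal + ns * τs ≤ ∑ i, Aᶜ.indicator (fun _ => (1:ℝ)) (Q2 i)} with hBs2
    have ht1 := chernoff Dt hA nt hτt
    have ht2 := chernoff Dt hA.compl nt hτt
    have hs1 := chernoff Ds hA ns hτs
    have hs2 := chernoff Ds hA.compl ns hτs
    rw [← hBt1] at ht1
    rw [← hBt2] at ht2
    rw [← hBs1] at hs1
    rw [← hBs2] at hs2
    -- numeric bound
    have hexpL : Real.exp (-L) = δ/2 := by
      rw [hLdef, Real.exp_neg, Real.exp_log (by positivity), inv_div]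
    have hnum : ∀ (n : ℕ) (τ ε : ℝ), 0 < (n:ℝ) → τ = (29/10)*ε → ε^2 = L/(2*n) →
        Real.exp (-((n:ℝ) * τ^2)/2) ≤ δ/4 := by
      intro n τ ε hn hτ hε
      have harg : -((n:ℝ) * τ^2)/2 = (-L) + (-(441/400)*L) := by
        rw [hτ, mul_pow, hε]
        field_simp
        ring
      rw [harg, Real.exp_add, hexpL]
      have h441 : Real.exp (-(441/400)*L) ≤ Real.exp (-L) := by
        apply Real.exp_le_exp.2; linarith
      rw [hexpL] at h441
      nlinarith [Real.exp_pos (-(441/400)*L)]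
    have hεt2 : εt^2 = L/(2*(nt:ℝ)) := Real.sq_sqrt (by positivity)
    have hεs2 : εs^2 = L/(2*(ns:ℝ)) := Real.sq_sqrt (by positivity)
    have hbt : ENNReal.ofReal (Real.exp (-((nt:ℝ) * τt^2)/2)) ≤ ENNReal.ofReal (δ/4) :=
      ENNReal.ofReal_le_ofReal (hnum nt τt εt hnt' hτtdef hεt2)
    have hbs : ENNReal.ofReal (Real.exp (-((ns:ℝ) * τs^2)/2)) ≤ ENNReal.ofReal (δ/4) :=
      ENNReal.ofReal_le_ofReal (hnum ns τs εs hns' hτsdef hεs2)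
    -- complement inclusion
    have hGc : Gᶜ ⊆ (Prod.fst ⁻¹' Bt1) ∪ (Prod.fst ⁻¹' Bt2) ∪
        ((Prod.snd ⁻¹' Bs1) ∪ (Prod.snd ⁻¹' Bs2)) := by
      intro Q hQ
      simp only [hGdef, Set.mem_compl_iff, Set.mem_setOf_eq, not_and_or, not_lt] at hQ
      have hsumc : ∀ (m : ℕ) (R : Fin m → X),
          ∑ i, Aᶜ.indicator (fun _ => (1:ℝ)) (R i)
            = m - ∑ i, A.indicator (fun _ => (1:ℝ)) (R i) := by
        intro m R
        have : ∀ i : Fin m, Aᶜ.indicator (fun _ => (1:ℝ)) (R i)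
            = 1 - A.indicator (fun _ => (1:ℝ)) (R i) := by
          intro i
          by_cases h : R i ∈ A <;>
            simp [Set.indicator_of_mem, Set.indicator_of_notMem, h]
        rw [Finset.sum_congr rfl (fun i _ => this i), Finset.sum_sub_distrib]
        simp
      rcases hQ with hQ | hQ
      · -- t sample deviates
        have hemp : (emp Q.1 A).toReal = (∑ i, A.indicator (fun _ => (1:ℝ)) (Q.1 i)) / nt :=
          emp_apply Q.1 hA
        have hS : (∑ i, A.indicator (fun _ => (1:ℝ)) (Q.1 i)) = nt * (emp Q.1 A).toReal := by
          rw [hemp]; field_simp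
        rcases le_abs.mp hQ with h | h
        · left; left
          simp only [hBt1, Set.mem_preimage, Set.mem_setOf_eq]
          have := mul_le_mul_of_nonneg_left h hnt'.le
          rw [hS, ← hqtdef]
          ring_nf at this ⊢
          linarith
        · left; right
          simp only [hBt2, Set.mem_preimage, Set.mem_setOf_eq]
          have hcompl : (Dt Aᶜ).toReal = 1 - qt := by
            rw [prob_compl_eq_one_sub hA, ENNReal.toReal_sub_of_le prob_le_one ENNReal.one_ne_top]
            simp [hqtdef]
          rw [hcompl, hsumc nt Q.1, hS]
          have := mul_le_mul_of_nonneg_left h hnt'.le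
          ring_nf at this ⊢
          linarith
      · -- s sample deviates
        have hemp : (emp Q.2 A).toReal = (∑ i, A.indicator (fun _ => (1:ℝ)) (Q.2 i)) / ns :=
          emp_apply Q.2 hA
        have hS : (∑ i, A.indicator (fun _ => (1:ℝ)) (Q.2 i)) = ns * (emp Q.2 A).toReal := by
          rw [hemp]; field_simp
        rcases le_abs.mp hQ with h | h
        · right; left
          simp only [hBs1, Set.mem_preimage, Set.mem_setOf_eq]
          have := mul_le_mul_of_nonneg_left h hns'.le
          rw [hS, ← hqsdef]
          ring_nf at this ⊢
          linarith
        · right; right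
          simp only [hBs2, Set.mem_preimage, Set.mem_setOf_eq]
          have hcompl : (Ds Aᶜ).toReal = 1 - qs := by
            rw [prob_compl_eq_one_sub hA, ENNReal.toReal_sub_of_le prob_le_one ENNReal.one_ne_top]
            simp [hqsdef]
          rw [hcompl, hsumc ns Q.2, hS]
          have := mul_le_mul_of_nonneg_left h hns'.le
          ring_nf at this ⊢
          linarith
    -- measures of lifted tails
    have hfst : ∀ B : Set (Fin nt → X), μ (Prod.fst ⁻¹' B) = Measure.pi (fun _ : Fin nt => Dt) B := by
      intro B
      rw [hμdef, ← Set.prod_univ, Measure.prod_prod, measure_univ, mul_one]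
    have hsnd : ∀ B : Set (Fin ns → X), μ (Prod.snd ⁻¹' B) = Measure.pi (fun _ : Fin ns => Ds) B := by
      intro B
      rw [hμdef, ← Set.univ_prod, Measure.prod_prod, measure_univ, one_mul]
    have hμGc : μ Gᶜ ≤ ENNReal.ofReal δ := by
      calc μ Gᶜ ≤ μ ((Prod.fst ⁻¹' Bt1) ∪ (Prod.fst ⁻¹' Bt2) ∪
          ((Prod.snd ⁻¹' Bs1) ∪ (Prod.snd ⁻¹' Bs2))) := measure_mono hGc
      _ ≤ μ ((Prod.fst ⁻¹' Bt1) ∪ (Prod.fst ⁻¹' Bt2)) + μ ((Prod.snd ⁻¹' Bs1) ∪ (Prod.snd ⁻¹' Bs2)) :=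
          measure_union_le _ _
      _ ≤ (μ (Prod.fst ⁻¹' Bt1) + μ (Prod.fst ⁻¹' Bt2)) +
          (μ (Prod.snd ⁻¹' Bs1) + μ (Prod.snd ⁻¹' Bs2)) :=
          add_le_add (measure_union_le _ _) (measure_union_le _ _)
      _ = (Measure.pi (fun _ : Fin nt => Dt) Bt1 + Measure.pi (fun _ : Fin nt => Dt) Bt2) +
          (Measure.pi (fun _ : Fin ns => Ds) Bs1 + Measure.pi (fun _ : Fin ns => Ds) Bs2) := by
          rw [hfst, hfst, hsnd, hsnd]
      _ ≤ (ENNReal.ofReal (δ/4) + ENNReal.ofReal (δ/4)) +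
          (ENNReal.ofReal (δ/4) + ENNReal.ofReal (δ/4)) := by
          apply add_le_add (add_le_add (le_trans ht1 hbt) (le_trans ht2 hbt))
            (add_le_add (le_trans hs1 hbs) (le_trans hs2 hbs))
      _ = ENNReal.ofReal δ := by
          have h4 : (0:ℝ) ≤ δ/4 := by positivity
          rw [← ENNReal.ofReal_add h4 h4]
          have h44 : (0:ℝ) ≤ δ/4 + δ/4 := by positivity
          rw [← ENNReal.ofReal_add h44 h44]
          congr 1
          ring
    -- conclude
    have h1 : (1:ENNReal) ≤ μ G + μ Gᶜ := by
      calc (1:ENNReal) = μ Set.univ := measure_univ.symm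
      _ = μ (G ∪ Gᶜ) := by rw [Set.union_compl_self]
      _ ≤ μ G + μ Gᶜ := measure_union_le _ _
    have h2 : ENNReal.ofReal (1 - δ) + ENNReal.ofReal δ ≤ μ G + ENNReal.ofReal δ := by
      calc ENNReal.ofReal (1 - δ) + ENNReal.ofReal δ = ENNReal.ofReal 1 := by
            rw [← ENNReal.ofReal_add (by linarith) hδ0.le]; norm_num
      _ = 1 := ENNReal.ofReal_one
      _ ≤ μ G + μ Gᶜ := h1
      _ ≤ μ G + ENNReal.ofReal δ := add_le_add (le_refl _) hμGc
    have h3 : ENNReal.ofReal (1 - δ) ≤ μ G :=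
      (ENNReal.add_le_add_iff_right ENNReal.ofReal_ne_top).mp h2
    exact le_trans h3 (measure_mono step1)
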